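/- Let k ≥ 3 and let A_1, …, A_k be sets of m integers each in {1, …, U}. Define the m^{k−2}(k−1)U-dimensional 0/1 vectors v'_{A_1+⋯+A_{k−1}} := the concatenation, over all tuples (a_1, …, a_{k−2}) ∈ A_1 × ⋯ × A_{k−2} in lexicographic order, of the blocks 0^{a_1+⋯+a_{k−2}} ∘ v_{A_{k−1}} ∘ 0^{(k−2)U−a_1−⋯−a_{k−2}}, and v'_{A_k} := the m^{k−2}-fold repetition of the block v_{A_k} ∘ 0^{(k−2)U}. Then the inner product of v'_{A_1+⋯+A_{k−1}} and v'_{A_k} is nonzero if and only if there is a tuple (a_1, …, a_k) ∈ A_1 × ⋯ × A_k with a_1 + ⋯ + a_{k−1} = a_k. -/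

import Mathlib

/-- Characteristic vector (over ℕ) of a set `X ⊆ {1, …, U}`:
position `i ∈ {1, …, U}` carries a `1` iff `i ∈ X`. -/
def charVec (U : ℕ) (X : Finset ℕ) : List ℕ :=
  (List.range U).map (fun i => if i + 1 ∈ X then 1 else 0)

/-- Inner product of two 0/1 vectors given as lists of equal length. -/
def innerProd (u v : List ℕ) : ℕ := (List.zipWith (· * ·) u v).sum

lemma innerProd_append {u1 v1 : List ℕ} (u2 v2 : List ℕ) (h : u1.length = v1.length) :
    innerProd (u1 ++ u2) (v1 ++ v2) = innerProd u1 v1 + innerProd u2 v2 := by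
  unfold innerProd
  rw [List.zipWith_append h, List.sum_append]

lemma innerProd_ne_zero_iff : ∀ (u v : List ℕ),
    innerProd u v ≠ 0 ↔ ∃ p, u.getD p 0 ≠ 0 ∧ v.getD p 0 ≠ 0 := by
  intro u
  induction u with
  | nil => intro v; simp [innerProd]
  | cons x u ih =>
    intro v
    cases v with
    | nil => simp [innerProd]
    | cons y v =>
      simp only [innerProd, List.zipWith_cons_cons, List.sum_cons]
      constructor
      · intro h
        rcases Nat.eq_zero_or_pos (x * y) with h0 | h0
        · have := (ih v).mp (by simpa [innerProd, h0] using h)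
          obtain ⟨p, hp⟩ := this
          exact ⟨p + 1, by simpa using hp⟩
        · have h2 := Nat.mul_ne_zero_iff.mp h0.ne'
          exact ⟨0, by simpa using h2.1, by simpa using h2.2⟩
      · rintro ⟨p, hp1, hp2⟩
        cases p with
        | zero =>
          simp only [List.getD_cons_zero] at hp1 hp2
          positivity
        | succ p =>
          simp only [List.getD_cons_succ] at hp1 hp2
          have := (ih v).mpr ⟨p, hp1, hp2⟩
          simp only [innerProd] at this
          omega

lemma getD_charVec (U : ℕ) (X : Finset ℕ) (p : ℕ) :
    (charVec U X).getD p 0 = if p < U ∧ p + 1 ∈ X then 1 else 0 := by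
  unfold charVec
  by_cases h : p < U
  · rw [List.getD_eq_getElem _ _ (by simpa using h)]
    simp [h]
  · rw [List.getD_eq_default _ _ (by simpa using Nat.le_of_not_lt h)]
    simp [h]

lemma getD_zeros (n p : ℕ) : (List.replicate n (0:ℕ)).getD p 0 = 0 := by
  by_cases h : p < n
  · rw [List.getD_eq_getElem _ _ (by simpa using h)]; simp
  · rw [List.getD_eq_default _ _ (by simpa using Nat.le_of_not_lt h)]

lemma ip_flatten (B1 : ℕ → List ℕ) (B2 : List ℕ) :
    ∀ (l : List ℕ), (∀ j ∈ l, (B1 j).length = B2.length) →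
    innerProd ((l.map B1).flatten) ((List.replicate l.length B2).flatten)
      = (l.map (fun j => innerProd (B1 j) B2)).sum := by
  intro l
  induction l with
  | nil => intro _; simp [innerProd]
  | cons x l ih =>
    intro h
    simp only [List.map_cons, List.length_cons, List.replicate_succ,
      List.flatten_cons, List.sum_cons]
    rw [innerProd_append _ _ (h x (by simp)), ih (fun j hj => h j (by simp [hj]))]

lemma digits_exists (m : ℕ) (hm : 1 ≤ m) : ∀ (n : ℕ) (f : ℕ → ℕ), (∀ d < n, f d < m) →
    ∃ j < m ^ n, ∀ d < n, j / m ^ (n - 1 - d) % m = f d := by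
  intro n
  induction n with
  | zero => intro f _; exact ⟨0, by simp, by omega⟩
  | succ n ih =>
    intro f hf
    obtain ⟨j', hj', hd⟩ := ih (fun d => f (d + 1)) (fun d hd => hf (d + 1) (by omega))
    refine ⟨j' + m ^ n * f 0, ?_, ?_⟩
    · have h0 : f 0 < m := hf 0 (by omega)
      calc j' + m ^ n * f 0 < m ^ n + m ^ n * (m - 1) := by
            have : f 0 ≤ m - 1 := by omega
            have := Nat.mul_le_mul_left (m ^ n) this
            omega
        _ = m ^ n * m := by
            have h1 : m ^ n * (m - 1) = m ^ n * m - m ^ n := by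
              rw [Nat.mul_sub, mul_one]
            have h2 : m ^ n ≤ m ^ n * m := Nat.le_mul_of_pos_right _ hm
            omega
        _ = m ^ (n + 1) := by ring
    · intro d hd1
      cases d with
      | zero =>
        have : n + 1 - 1 - 0 = n := by omega
        rw [this, Nat.add_mul_div_left _ _ (pow_pos hm n),
          Nat.div_eq_of_lt hj']
        simpa using Nat.mod_eq_of_lt (hf 0 (by omega))
      | succ d =>
        have hdn : d < n := by omega
        have e1 : n + 1 - 1 - (d + 1) = n - 1 - d := by omega
        have e2 : m ^ n = m ^ (n - 1 - d) * m ^ (d + 1) := by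
          rw [← pow_add]; congr 1; omega
        have e3 : m ^ n * f 0 = m ^ (n - 1 - d) * (m ^ (d + 1) * f 0) := by
          rw [e2]; ring
        have e4 : m ^ (d + 1) * f 0 = m ^ d * f 0 * m := by ring
        rw [e1, e3, Nat.add_mul_div_left _ _ (pow_pos hm _), e4,
          Nat.add_mul_mod_self_right]
        exact hd d hdn

lemma charVec_length (U : ℕ) (X : Finset ℕ) : (charVec U X).length = U := by
  simp [charVec]

lemma getD_lhs (s t U : ℕ) (X : Finset ℕ) (p : ℕ) :
    ((List.replicate s (0:ℕ) ++ charVec U X) ++ List.replicate t 0).getD p 0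
      = if s ≤ p ∧ p - s < U ∧ (p - s) + 1 ∈ X then 1 else 0 := by
  have hlen : (List.replicate s (0:ℕ) ++ charVec U X).length = s + U := by
    simp [charVec_length]
  by_cases h1 : p < s + U
  · rw [List.getD_append _ _ _ _ (by omega)]
    by_cases h2 : p < s
    · rw [List.getD_append _ _ _ _ (by simpa using h2), getD_zeros]
      have : ¬ (s ≤ p) := by omega
      simp [this]
    · rw [List.getD_append_right _ _ _ _ (by simp; omega), List.length_replicate,
        getD_charVec]
      have hs : s ≤ p := by omega
      have hu : p - s < U := by omega
      simp [hs, hu]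
  · rw [List.getD_append_right _ _ _ _ (by omega), getD_zeros]
    have hnc : ¬ (s ≤ p ∧ p - s < U ∧ (p - s) + 1 ∈ X) := by
      rintro ⟨_, h, _⟩; omega
    rw [if_neg hnc]

lemma getD_rhs (z U : ℕ) (Y : Finset ℕ) (p : ℕ) :
    ((charVec U Y ++ List.replicate z (0:ℕ))).getD p 0
      = if p < U ∧ p + 1 ∈ Y then 1 else 0 := by
  by_cases h : p < U
  · rw [List.getD_append _ _ _ _ (by simpa [charVec_length] using h), getD_charVec]
  · rw [List.getD_append_right _ _ _ _ (by simp [charVec_length]; omega), getD_zeros]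
    simp [h]

lemma block_iff (U s t z : ℕ) (X Y : Finset ℕ)
    (hX : ∀ x ∈ X, 1 ≤ x ∧ x ≤ U) (hY : ∀ y ∈ Y, 1 ≤ y ∧ y ≤ U) :
    innerProd (List.replicate s 0 ++ charVec U X ++ List.replicate t 0)
              (charVec U Y ++ List.replicate z 0) ≠ 0
    ↔ ∃ x ∈ X, s + x ∈ Y := by
  rw [innerProd_ne_zero_iff]
  constructor
  · rintro ⟨p, h1, h2⟩
    rw [getD_lhs] at h1
    rw [getD_rhs] at h2
    by_cases c1 : s ≤ p ∧ p - s < U ∧ (p - s) + 1 ∈ X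
    · by_cases c2 : p < U ∧ p + 1 ∈ Y
      · refine ⟨p - s + 1, c1.2.2, ?_⟩
        have : s + (p - s + 1) = p + 1 := by omega
        rw [this]; exact c2.2
      · simp [c2] at h2
    · simp [c1] at h1
  · rintro ⟨x, hx, hsx⟩
    obtain ⟨hx1, hxU⟩ := hX x hx
    obtain ⟨_, hsxU⟩ := hY _ hsx
    refine ⟨s + x - 1, ?_, ?_⟩
    · rw [getD_lhs]
      have e : s + x - 1 - s + 1 = x := by omega
      have : s ≤ s + x - 1 ∧ s + x - 1 - s < U ∧ (s + x - 1 - s) + 1 ∈ X := by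
        refine ⟨by omega, by omega, ?_⟩
        rw [e]; exact hx
      simp [this]
    · rw [getD_rhs]
      have e : s + x - 1 + 1 = s + x := by omega
      have : s + x - 1 < U ∧ s + x - 1 + 1 ∈ Y := by
        refine ⟨by omega, ?_⟩
        rw [e]; exact hsx
      simp [this]

/-- For `k ≥ 3` and sets `A_1, …, A_k` of `m` integers each in `{1, …, U}`
(given by 0-indexed sorted enumerations `a i : {0,…,m-1} → ℕ` for `i < k`), the inner
product of `v'_{A_1+⋯+A_{k-1}}` (blocks `0^{a_1+⋯+a_{k-2}} v_{A_{k-1}} 0^{(k-2)U - Σ}`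
over all tuples of `A_1 × ⋯ × A_{k-2}` in lexicographic order) and
`v'_{A_k} = (v_{A_k} 0^{(k-2)U})^{m^{k-2}}` is nonzero iff there is
`(a_1, …, a_k) ∈ A_1 × ⋯ × A_k` with `a_1 + ⋯ + a_{k-1} = a_k`. -/
theorem stmt1 (k m U : ℕ) (hk : 3 ≤ k) (hm : 1 ≤ m) (hU : 1 ≤ U)
    (a : ℕ → ℕ → ℕ)
    (hmono : ∀ i < k, ∀ j j' : ℕ, j < j' → j' < m → a i j < a i j')
    (hmem : ∀ i < k, ∀ j < m, a i j ∈ Finset.Icc 1 U) :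
    -- sum of the tuple encoded (in lexicographic order) by block index `j < m^(k-2)`
    let S : ℕ → ℕ := fun j =>
      ∑ d ∈ Finset.range (k - 2), a d (j / m ^ (k - 2 - 1 - d) % m)
    let vAk1 : List ℕ := charVec U (Finset.image (a (k - 2)) (Finset.range m))
    let vAk : List ℕ := charVec U (Finset.image (a (k - 1)) (Finset.range m))
    let v1 : List ℕ := ((List.range (m ^ (k - 2))).map (fun j =>
      List.replicate (S j) 0 ++ vAk1 ++ List.replicate ((k - 2) * U - S j) 0)).flatten
    let v2 : List ℕ :=
      (List.replicate (m ^ (k - 2)) (vAk ++ List.replicate ((k - 2) * U) 0)).flatten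
    innerProd v1 v2 ≠ 0 ↔
      ∃ f : ℕ → ℕ, (∀ i < k, f i < m) ∧
        (∑ i ∈ Finset.range (k - 1), a i (f i)) = a (k - 1) (f (k - 1)) := by
  intro S vAk1 vAk v1 v2
  set X := Finset.image (a (k - 2)) (Finset.range m) with hXdef
  set Y := Finset.image (a (k - 1)) (Finset.range m) with hYdef
  have hX : ∀ x ∈ X, 1 ≤ x ∧ x ≤ U := by
    intro x hx
    simp only [hXdef, Finset.mem_image, Finset.mem_range] at hx
    obtain ⟨j, hj, rfl⟩ := hx
    simpa [Finset.mem_Icc] using hmem (k - 2) (by omega) j hj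
  have hY : ∀ y ∈ Y, 1 ≤ y ∧ y ≤ U := by
    intro y hy
    simp only [hYdef, Finset.mem_image, Finset.mem_range] at hy
    obtain ⟨j, hj, rfl⟩ := hy
    simpa [Finset.mem_Icc] using hmem (k - 1) (by omega) j hj
  have hSle : ∀ j, S j ≤ (k - 2) * U := by
    intro j
    calc S j ≤ ∑ _d ∈ Finset.range (k - 2), U := by
          refine Finset.sum_le_sum (fun d hd => ?_)
          have hd' : d < k - 2 := Finset.mem_range.mp hd
          exact (Finset.mem_Icc.mp
            (hmem d (by omega) _ (Nat.mod_lt _ hm))).2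
      _ = (k - 2) * U := by simp [Finset.sum_const, Nat.smul_one_eq_cast]
  set B1 : ℕ → List ℕ := fun j =>
    List.replicate (S j) 0 ++ vAk1 ++ List.replicate ((k - 2) * U - S j) 0 with hB1
  set B2 : List ℕ := vAk ++ List.replicate ((k - 2) * U) 0 with hB2
  have hlen : ∀ j ∈ List.range (m ^ (k - 2)), (B1 j).length = B2.length := by
    intro j _
    have := hSle j
    simp only [hB1, hB2, List.length_append, List.length_replicate, charVec_length,
      vAk1, vAk]
    omega
  have h1 : innerProd v1 v2
      = ((List.range (m ^ (k - 2))).map (fun j => innerProd (B1 j) B2)).sum := by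
    have := ip_flatten B1 B2 (List.range (m ^ (k - 2))) hlen
    simpa [v1, v2, hB1, hB2, List.length_range] using this
  have h2 : innerProd v1 v2 ≠ 0 ↔
      ∃ j < m ^ (k - 2), ∃ x ∈ X, S j + x ∈ Y := by
    rw [h1, Ne, List.sum_eq_zero_iff]
    push_neg
    constructor
    · rintro ⟨y, hy, hy0⟩
      simp only [List.mem_map, List.mem_range] at hy
      obtain ⟨j, hj, rfl⟩ := hy
      refine ⟨j, hj, ?_⟩
      have := (block_iff U (S j) ((k - 2) * U - S j) ((k - 2) * U) X Y hX hY).mp hy0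
      exact this
    · rintro ⟨j, hj, hex⟩
      refine ⟨innerProd (B1 j) B2, ?_, ?_⟩
      · exact List.mem_map.mpr ⟨j, List.mem_range.mpr hj, rfl⟩
      · exact (block_iff U (S j) ((k - 2) * U - S j) ((k - 2) * U) X Y hX hY).mpr hex
  rw [h2]
  constructor
  · rintro ⟨j, hjN, x, hx, hsx⟩
    simp only [hXdef, Finset.mem_image, Finset.mem_range] at hx
    obtain ⟨s, hs, rfl⟩ := hx
    simp only [hYdef, Finset.mem_image, Finset.mem_range] at hsx
    obtain ⟨t, ht, hEq⟩ := hsx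
    refine ⟨fun i => if i < k - 2 then j / m ^ (k - 2 - 1 - i) % m
      else if i = k - 2 then s else t, ?_, ?_⟩
    · intro i _
      by_cases h1 : i < k - 2
      · simpa [h1] using Nat.mod_lt _ hm
      · by_cases h3 : i = k - 2 <;> simp [h1, h3, hs, ht]
    · have hk1 : k - 1 = (k - 2) + 1 := by omega
      have hsum : (∑ i ∈ Finset.range (k - 2),
          a i (if i < k - 2 then j / m ^ (k - 2 - 1 - i) % m
            else if i = k - 2 then s else t)) = S j := by
        refine Finset.sum_congr rfl (fun i hi => ?_)
        have := Finset.mem_range.mp hi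
        simp [this]
      rw [hk1, Finset.sum_range_succ, hsum]
      rw [hk1] at hEq
      simp only [show ¬(k - 2 + 1 < k - 2) from by omega,
        show k - 2 + 1 ≠ k - 2 from by omega, lt_self_iff_false,
        if_false, if_true, ne_eq, reduceIte, eq_self_iff_true, not_false_iff]
      omega
  · rintro ⟨f, hfm, hfsum⟩
    obtain ⟨j, hjN, hdig⟩ := digits_exists m hm (k - 2) f (fun d hd => hfm d (by omega))
    refine ⟨j, hjN, a (k - 2) (f (k - 2)), ?_, ?_⟩
    · exact Finset.mem_image.mpr ⟨f (k - 2), Finset.mem_range.mpr (hfm _ (by omega)), rfl⟩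
    · have hS : S j = ∑ i ∈ Finset.range (k - 2), a i (f i) := by
        refine Finset.sum_congr rfl (fun i hi => ?_)
        rw [hdig i (Finset.mem_range.mp hi)]
      have hk1 : k - 1 = (k - 2) + 1 := by omega
      have : S j + a (k - 2) (f (k - 2)) = ∑ i ∈ Finset.range (k - 1), a i (f i) := by
        rw [hS, hk1, Finset.sum_range_succ]
      rw [this, hfsum]
      exact Finset.mem_image.mpr ⟨f (k - 1), Finset.mem_range.mpr (hfm _ (by omega)), rfl⟩
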